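/- For a prime p and the polynomial f = x³ + y³ + z³ over 𝔽_p with p ≠ 3: the coefficient of x^{p−1}y^{p−1}z^{p−1} in f^{p−1} is nonzero in 𝔽_p if and only if p ≡ 1 (mod 3). -/

import Mathlib

/-!
STATEMENT 12: For a prime `p ≠ 3` and `f = x³ + y³ + z³` over `𝔽_p`: the
coefficient of `x^{p−1} y^{p−1} z^{p−1}` in `f^{p−1}` is nonzero in `𝔽_p` if and
only if `p ≡ 1 (mod 3)`.
-/

open MvPolynomial
open Finset


theorem coeff_pow_fermatCubic_ne_zero_iff (p : ℕ) (hp : p.Prime) (hp3 : p ≠ 3) :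
    MvPolynomial.coeff (Finsupp.equivFunOnFinite.symm fun _ : Fin 3 => p - 1)
      (((X 0 : MvPolynomial (Fin 3) (ZMod p)) ^ 3 + X 1 ^ 3 + X 2 ^ 3) ^ (p - 1))
      ≠ 0 ↔ p % 3 = 1 := by
  have hp2 : 2 ≤ p := hp.two_le
  have h0 : p % 3 ≠ 0 := by
    intro h
    rcases hp.eq_one_or_self_of_dvd 3 (Nat.dvd_of_mod_eq_zero h) with h' | h' <;> omega
  set m : (Fin 3) →₀ ℕ := Finsupp.equivFunOnFinite.symm fun _ : Fin 3 => p - 1 with hm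
  have hsum : ((X 0 : MvPolynomial (Fin 3) (ZMod p)) ^ 3 + X 1 ^ 3 + X 2 ^ 3)
      = ∑ i : Fin 3, X i ^ 3 := by rw [Fin.sum_univ_three]
  rw [hsum, Finset.sum_pow_eq_sum_piAntidiag, MvPolynomial.coeff_sum]
  have key : ∀ k : Fin 3 → ℕ,
      MvPolynomial.coeff m ((Nat.multinomial univ k : MvPolynomial (Fin 3) (ZMod p)) *
        ∏ i : Fin 3, (X i ^ 3) ^ k i)
      = if ∀ i, 3 * k i = p - 1 then (Nat.multinomial univ k : ZMod p) else 0 := by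
    intro k
    have hprod : ∏ i : Fin 3, ((X i : MvPolynomial (Fin 3) (ZMod p)) ^ 3) ^ k i
        = monomial (Finsupp.single 0 (3 * k 0) + Finsupp.single 1 (3 * k 1)
            + Finsupp.single 2 (3 * k 2)) (1 : ZMod p) := by
      simp_rw [← pow_mul]
      rw [Fin.prod_univ_three, X_pow_eq_monomial, X_pow_eq_monomial, X_pow_eq_monomial,
        monomial_mul, monomial_mul, one_mul, one_mul]
    have hiff : (Finsupp.single 0 (3 * k 0) + Finsupp.single 1 (3 * k 1)
        + Finsupp.single 2 (3 * k 2) = m) ↔ ∀ i : Fin 3, 3 * k i = p - 1 := by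
      simp only [Finsupp.ext_iff, Finsupp.add_apply, Finsupp.single_apply, hm,
        Finsupp.coe_equivFunOnFinite_symm]
      constructor
      · intro h i
        have := h i
        fin_cases i <;> simpa using this
      · intro h i
        fin_cases i <;> simp [h 0, h 1, h 2]
    rw [hprod, ← map_natCast (C : ZMod p →+* _), coeff_C_mul, coeff_monomial]
    by_cases h : ∀ i : Fin 3, 3 * k i = p - 1
    · rw [if_pos (hiff.mpr h), if_pos h, mul_one]
    · rw [if_neg (fun hc => h (hiff.mp hc)), if_neg h, mul_zero]
  simp_rw [key]
  by_cases h3 : p % 3 = 1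
  · have hdvd : 3 ∣ p - 1 := by omega
    obtain ⟨t, ht⟩ := hdvd
    simp only [h3, iff_true]
    have hmem : (fun _ : Fin 3 => t) ∈ Finset.piAntidiag univ (p - 1) := by
      rw [Finset.mem_piAntidiag]
      exact ⟨by rw [Fin.sum_univ_three]; omega, fun i _ => Finset.mem_univ i⟩
    have hothers : ∀ k ∈ Finset.piAntidiag univ (p - 1), k ≠ (fun _ : Fin 3 => t) →
        (if ∀ i : Fin 3, 3 * k i = p - 1 then (Nat.multinomial univ k : ZMod p) else 0) = 0 := by
      intro k hk hne
      rw [if_neg]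
      intro hall
      apply hne
      funext i
      have := hall i
      omega
    rw [Finset.sum_eq_single_of_mem _ hmem hothers, if_pos (fun i => by show 3 * t = p - 1; omega)]
    intro hzero
    have hdvd' : p ∣ Nat.multinomial univ (fun _ : Fin 3 => t) :=
      (ZMod.natCast_eq_zero_iff _ _).mp hzero
    have hspec := Nat.multinomial_spec univ (fun _ : Fin 3 => t)
    have hsum3 : (∑ _i : Fin 3, t) = p - 1 := by rw [Fin.sum_univ_three]; omega
    rw [hsum3] at hspec
    have hfac : p ∣ Nat.factorial (p - 1) := hspec ▸ Dvd.dvd.mul_left hdvd' _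
    have := (Nat.Prime.dvd_factorial hp).mp hfac
    omega
  · refine iff_of_false (fun hne => hne ?_) h3
    apply Finset.sum_eq_zero
    intro k hk
    rw [if_neg]
    intro hall
    have := hall 0
    omega
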